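/- For a fixed CFG and input of length n, the total number of elementary parsing steps of the variant Earley algorithm satisfies 𝒱 ≤ (n+2) · ℰ, where ℰ is the total number of elementary parsing steps of the Earley algorithm (each including the initialization steps counting the number of distinct start productions). -/

import Mathlib

/-! Formalization of Earley parsing and the Nederhof–Satta variant. -/

variable {T N : Type}

/-- A context-free grammar: a start nonterminal and a set of productions. -/
structure CFG (T N : Type) where
  initial : N
  rules : Set (N × List (Symbol T N))

/-- One rewriting step of the grammar. -/
def CFG.Produces (g : CFG T N) (u v : List (Symbol T N)) : Prop :=
  ∃ A α p q, (A, α) ∈ g.rules ∧ u = p ++ [Symbol.nonterminal A] ++ q ∧ v = p ++ α ++ q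

/-- The derivation relation ⇒* (reflexive-transitive closure of rewriting). -/
def CFG.Derives (g : CFG T N) : List (Symbol T N) → List (Symbol T N) → Prop :=
  Relation.ReflTransGen g.Produces

/-- The language of the grammar: { w | S ⇒* w }. -/
def CFG.language (g : CFG T N) : Set (List T) :=
  { w | g.Derives [Symbol.nonterminal g.initial] (w.map Symbol.terminal) }

/-- `inputSlice w i j` is the substring a_{i+1}⋯a_j of `w` (0-based: w[i..j)), as symbols. -/
def inputSlice (w : List T) (i j : ℕ) : List (Symbol T N) :=
  ((w.take j).drop i).map Symbol.terminal

/-- The least Earley table: `Earley g w A α β i j` means the dotted item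
[A → α • β] is inserted in E_{i,j}. -/
inductive Earley (g : CFG T N) (w : List T) :
    N → List (Symbol T N) → List (Symbol T N) → ℕ → ℕ → Prop where
  | init {α} : (g.initial, α) ∈ g.rules → Earley g w g.initial [] α 0 0
  | predict {B α A β i j γ} : Earley g w B α (Symbol.nonterminal A :: β) i j →
      (A, γ) ∈ g.rules → Earley g w A [] γ j j
  | scan {A α a β i j} : Earley g w A α (Symbol.terminal a :: β) i j →
      w[j]? = some a → Earley g w A (α ++ [Symbol.terminal a]) β i (j + 1)
  | complete {A α B β i k γ j} : Earley g w A α (Symbol.nonterminal B :: β) i k →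
      Earley g w B γ [] k j → (B, γ) ∈ g.rules →
      Earley g w A (α ++ [Symbol.nonterminal B]) β i j

mutual
  /-- Forward part of the variant: `VarU g w β j` means suffix item [β] ∈ U_j. -/
  inductive VarU (g : CFG T N) (w : List T) : List (Symbol T N) → ℕ → Prop where
    | init {α} : (g.initial, α) ∈ g.rules → VarU g w α 0
    | predict {A β j γ} : VarU g w (Symbol.nonterminal A :: β) j →
        (A, γ) ∈ g.rules → VarU g w γ j
    | scan {a β j} : VarU g w (Symbol.terminal a :: β) j → w[j]? = some a →
        VarU g w β (j + 1)
    | complete {B β k γ j} : VarU g w (Symbol.nonterminal B :: β) k → (B, γ) ∈ g.rules →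
        VarT g w γ k j → VarU g w β j

  /-- Backward part of the variant: `VarT g w β j m` means suffix item [β] ∈ T_{j,m}. -/
  inductive VarT (g : CFG T N) (w : List T) : List (Symbol T N) → ℕ → ℕ → Prop where
    | empty {m} : VarU g w [] m → VarT g w [] m m
    | scan {a β j m} : VarU g w (Symbol.terminal a :: β) j → w[j]? = some a →
        VarT g w β (j + 1) m → VarT g w (Symbol.terminal a :: β) j m
    | complete {B β k γ j m} : VarU g w (Symbol.nonterminal B :: β) k → (B, γ) ∈ g.rules →
        VarT g w γ k j → VarT g w β j m → VarT g w (Symbol.nonterminal B :: β) k m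
end

/-- Number of initialization steps: distinct right-hand sides of start productions. -/
noncomputable def countInit (g : CFG T N) : ℕ :=
  Set.ncard {α | (g.initial, α) ∈ g.rules}

/-- ℰ₁: applicable instantiations of Earley's prediction rule. -/
noncomputable def countE1 (g : CFG T N) (w : List T) : ℕ :=
  Set.ncard {x : N × List (Symbol T N) × N × List (Symbol T N) × ℕ × ℕ × List (Symbol T N) |
    match x with
      | (B, α, A, β, i, j, γ) =>
          Earley g w B α (Symbol.nonterminal A :: β) i j ∧ (A, γ) ∈ g.rules}

/-- ℰ₂: applicable instantiations of Earley's scanning rule. -/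
noncomputable def countE2 (g : CFG T N) (w : List T) : ℕ :=
  Set.ncard {x : N × List (Symbol T N) × T × List (Symbol T N) × ℕ × ℕ |
    match x with
      | (A, α, a, β, i, j) =>
          Earley g w A α (Symbol.terminal a :: β) i j ∧ w[j]? = some a}

/-- ℰ₃: applicable instantiations of Earley's completion rule. -/
noncomputable def countE3 (g : CFG T N) (w : List T) : ℕ :=
  Set.ncard {x : N × List (Symbol T N) × N × List (Symbol T N) × ℕ × ℕ × List (Symbol T N) × ℕ |
    match x with
      | (A, α, B, β, i, k, γ, j) =>
          Earley g w A α (Symbol.nonterminal B :: β) i k ∧ (B, γ) ∈ g.rules ∧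
        Earley g w B γ [] k j}

/-- 𝒱₁: applicable instantiations of the variant's forward prediction rule. -/
noncomputable def countV1 (g : CFG T N) (w : List T) : ℕ :=
  Set.ncard {x : N × List (Symbol T N) × ℕ × List (Symbol T N) |
    match x with
      | (A, β, j, γ) =>
          VarU g w (Symbol.nonterminal A :: β) j ∧ (A, γ) ∈ g.rules}

/-- 𝒱₂: applicable instantiations of the variant's forward scanning rule. -/
noncomputable def countV2 (g : CFG T N) (w : List T) : ℕ :=
  Set.ncard {x : T × List (Symbol T N) × ℕ |
    match x with
      | (a, β, j) =>
          VarU g w (Symbol.terminal a :: β) j ∧ w[j]? = some a}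

/-- 𝒱₃: applicable instantiations of the variant's forward completion rule. -/
noncomputable def countV3 (g : CFG T N) (w : List T) : ℕ :=
  Set.ncard {x : N × List (Symbol T N) × ℕ × List (Symbol T N) × ℕ |
    match x with
      | (B, β, k, γ, j) =>
          VarU g w (Symbol.nonterminal B :: β) k ∧ (B, γ) ∈ g.rules ∧ VarT g w γ k j}

/-- 𝒱₄: applicable instantiations of the variant's backward-initialization rule. -/
noncomputable def countV4 (g : CFG T N) (w : List T) : ℕ :=
  Set.ncard {m : ℕ | VarU g w [] m}

/-- 𝒱₅: applicable instantiations of the variant's backward scanning rule. -/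
noncomputable def countV5 (g : CFG T N) (w : List T) : ℕ :=
  Set.ncard {x : T × List (Symbol T N) × ℕ × ℕ |
    match x with
      | (a, β, j, m) =>
          VarU g w (Symbol.terminal a :: β) j ∧ w[j]? = some a ∧ VarT g w β (j + 1) m}

/-- 𝒱₆: applicable instantiations of the variant's backward completion rule. -/
noncomputable def countV6 (g : CFG T N) (w : List T) : ℕ :=
  Set.ncard {x : N × List (Symbol T N) × ℕ × List (Symbol T N) × ℕ × ℕ |
    match x with
      | (B, β, k, γ, j, m) =>
          VarU g w (Symbol.nonterminal B :: β) k ∧ (B, γ) ∈ g.rules ∧ VarT g w γ k j ∧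
        VarT g w β j m}


section Lemmas
variable {g : CFG T N} {w : List T}

theorem var_toEarley :
    (∀ β j, VarU g w β j →
      ∃ p : N × List (Symbol T N) × ℕ, Earley g w p.1 p.2.1 β p.2.2 j) ∧
    (∀ β k m, VarT g w β k m →
      ∀ A α i, Earley g w A α β i k → Earley g w A (α ++ β) [] i m) := by
  have c1 : ∀ {α : List (Symbol T N)}, (g.initial, α) ∈ g.rules →
      ∃ p : N × List (Symbol T N) × ℕ, Earley g w p.1 p.2.1 α p.2.2 0 :=
    fun hr => ⟨(g.initial, [], 0), Earley.init hr⟩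
  have c2 : ∀ {A : N} {β : List (Symbol T N)} {j : ℕ} {γ : List (Symbol T N)},
      VarU g w (Symbol.nonterminal A :: β) j → (A, γ) ∈ g.rules →
      (∃ p : N × List (Symbol T N) × ℕ, Earley g w p.1 p.2.1 (Symbol.nonterminal A :: β) p.2.2 j) →
      ∃ p : N × List (Symbol T N) × ℕ, Earley g w p.1 p.2.1 γ p.2.2 j := by
    rintro A β j γ _ hr ⟨⟨A', α', i'⟩, he⟩
    exact ⟨(A, [], j), Earley.predict he hr⟩
  have c3 : ∀ {a : T} {β : List (Symbol T N)} {j : ℕ},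
      VarU g w (Symbol.terminal a :: β) j → w[j]? = some a →
      (∃ p : N × List (Symbol T N) × ℕ, Earley g w p.1 p.2.1 (Symbol.terminal a :: β) p.2.2 j) →
      ∃ p : N × List (Symbol T N) × ℕ, Earley g w p.1 p.2.1 β p.2.2 (j + 1) := by
    rintro a β j _ ha ⟨⟨A', α', i'⟩, he⟩
    exact ⟨(A', _, i'), Earley.scan he ha⟩
  have c4 : ∀ {B : N} {β : List (Symbol T N)} {k : ℕ} {γ : List (Symbol T N)} {j : ℕ},
      VarU g w (Symbol.nonterminal B :: β) k → (B, γ) ∈ g.rules → VarT g w γ k j →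
      (∃ p : N × List (Symbol T N) × ℕ, Earley g w p.1 p.2.1 (Symbol.nonterminal B :: β) p.2.2 k) →
      (∀ A α i, Earley g w A α γ i k → Earley g w A (α ++ γ) [] i j) →
      ∃ p : N × List (Symbol T N) × ℕ, Earley g w p.1 p.2.1 β p.2.2 j := by
    rintro B β k γ j _ hr _ ⟨⟨A', α', i'⟩, he⟩ ih2
    have h1 := ih2 _ [] _ (Earley.predict he hr)
    exact ⟨(A', _, i'), Earley.complete he (by simpa using h1) hr⟩
  have c5 : ∀ {m : ℕ}, VarU g w [] m →
      (∃ p : N × List (Symbol T N) × ℕ, Earley g w p.1 p.2.1 [] p.2.2 m) →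
      ∀ A α i, Earley g w A α [] i m → Earley g w A (α ++ []) [] i m := by
    intro m _ _ A α i he; simpa using he
  have c6 : ∀ {a : T} {β : List (Symbol T N)} {j m : ℕ},
      VarU g w (Symbol.terminal a :: β) j → w[j]? = some a → VarT g w β (j + 1) m →
      (∃ p : N × List (Symbol T N) × ℕ, Earley g w p.1 p.2.1 (Symbol.terminal a :: β) p.2.2 j) →
      (∀ A α i, Earley g w A α β i (j + 1) → Earley g w A (α ++ β) [] i m) →
      ∀ A α i, Earley g w A α (Symbol.terminal a :: β) i j →
        Earley g w A (α ++ (Symbol.terminal a :: β)) [] i m := by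
    rintro a β j m _ ha _ _ ih A α i he
    have := ih A (α ++ [Symbol.terminal a]) i (Earley.scan he ha)
    simpa using this
  have c7 : ∀ {B : N} {β : List (Symbol T N)} {k : ℕ} {γ : List (Symbol T N)} {j m : ℕ},
      VarU g w (Symbol.nonterminal B :: β) k → (B, γ) ∈ g.rules → VarT g w γ k j →
      VarT g w β j m →
      (∃ p : N × List (Symbol T N) × ℕ, Earley g w p.1 p.2.1 (Symbol.nonterminal B :: β) p.2.2 k) →
      (∀ A α i, Earley g w A α γ i k → Earley g w A (α ++ γ) [] i j) →
      (∀ A α i, Earley g w A α β i j → Earley g w A (α ++ β) [] i m) →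
      ∀ A α i, Earley g w A α (Symbol.nonterminal B :: β) i k →
        Earley g w A (α ++ (Symbol.nonterminal B :: β)) [] i m := by
    rintro B β k γ j m _ hr _ _ _ ih1 ih2 A α i he
    have h1 := ih1 _ [] _ (Earley.predict he hr)
    have h2 := ih2 A (α ++ [Symbol.nonterminal B]) i
      (Earley.complete he (by simpa using h1) hr)
    simpa using h2
  constructor
  · intro β j h
    exact VarU.rec
      (motive_1 := fun β j _ => ∃ p : N × List (Symbol T N) × ℕ, Earley g w p.1 p.2.1 β p.2.2 j)
      (motive_2 := fun β k m _ => ∀ A α i, Earley g w A α β i k → Earley g w A (α ++ β) [] i m)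
      @c1 @c2 @c3 @c4 @c5 @c6 @c7 h
  · intro β k m h
    exact VarT.rec
      (motive_1 := fun β j _ => ∃ p : N × List (Symbol T N) × ℕ, Earley g w p.1 p.2.1 β p.2.2 j)
      (motive_2 := fun β k m _ => ∀ A α i, Earley g w A α β i k → Earley g w A (α ++ β) [] i m)
      @c1 @c2 @c3 @c4 @c5 @c6 @c7 h

end Lemmas

section Lemmas2
variable {g : CFG T N} {w : List T}

theorem Earley.bound {A α β i j} (h : Earley g w A α β i j) :
    (A, α ++ β) ∈ g.rules ∧ i ≤ j ∧ j ≤ w.length ∧ ∃ δ, (g.initial, δ) ∈ g.rules := by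
  induction h with
  | init hr => exact ⟨by simpa using hr, le_refl 0, Nat.zero_le _, _, hr⟩
  | predict _ hr ih => exact ⟨by simpa using hr, le_refl _, ih.2.2.1, ih.2.2.2⟩
  | scan _ ha ih =>
      have hj : _ < w.length := (List.getElem?_eq_some_iff.mp ha).1
      exact ⟨by simpa using ih.1, le_trans ih.2.1 (Nat.le_succ _), hj, ih.2.2.2⟩
  | complete h1 h2 hr ih1 ih2 =>
      exact ⟨by simpa using ih1.1, le_trans ih1.2.1 ih2.2.1, ih2.2.2.1, ih1.2.2.2⟩

/-- Choice of an Earley witness. -/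
noncomputable def pick (g : CFG T N) (w : List T) (β : List (Symbol T N)) (j : ℕ) :
    N × List (Symbol T N) × ℕ :=
  letI := Classical.propDecidable
  if h : ∃ p : N × List (Symbol T N) × ℕ, Earley g w p.1 p.2.1 β p.2.2 j then h.choose
  else (g.initial, [], 0)

theorem pick_spec {β j} (h : VarU g w β j) :
    Earley g w (pick g w β j).1 (pick g w β j).2.1 β (pick g w β j).2.2 j := by
  have hex := var_toEarley.1 β j h
  rw [pick, dif_pos hex]
  exact hex.choose_spec

end Lemmas2

section Fin
variable {g : CFG T N} {w : List T}

theorem finE1 (hfin : g.rules.Finite) :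
    {x : N × List (Symbol T N) × N × List (Symbol T N) × ℕ × ℕ × List (Symbol T N) |
      match x with
      | (B, α, A, β, i, j, γ) =>
          Earley g w B α (Symbol.nonterminal A :: β) i j ∧ (A, γ) ∈ g.rules}.Finite := by
  classical
  set n := w.length with hn
  set K := hfin.toFinset.sup (fun r => r.2.length) with hKdef
  apply Set.Finite.subset (Set.Finite.image
    (f := fun q : (N × List (Symbol T N)) × (N × List (Symbol T N)) × ℕ × ℕ × ℕ =>
      (q.1.1, q.1.2.take q.2.2.1, q.2.1.1, (q.1.2.drop q.2.2.1).tail,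
        q.2.2.2.1, q.2.2.2.2, q.2.1.2))
    (hfin.prod (hfin.prod (((Set.finite_Iic K).prod
      ((Set.finite_Iic n).prod (Set.finite_Iic n)))))))
  rintro ⟨B, α, A, β, i, j, γ⟩ ⟨he, hr⟩
  obtain ⟨hmem, hij, hjn, -⟩ := he.bound
  refine ⟨((B, α ++ (Symbol.nonterminal A :: β)), (A, γ), α.length, i, j), ?_, ?_⟩
  · refine ⟨hmem, hr, ?_, hij.trans hjn, hjn⟩
    have h1 : α.length ≤ (α ++ Symbol.nonterminal A :: β).length := by simp
    exact h1.trans (Finset.le_sup (f := fun r => r.2.length) (hfin.mem_toFinset.2 hmem))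
  · simp [List.take_left, List.drop_left]

theorem finE2 (hfin : g.rules.Finite) :
    {x : N × List (Symbol T N) × T × List (Symbol T N) × ℕ × ℕ |
      match x with
      | (A, α, a, β, i, j) =>
          Earley g w A α (Symbol.terminal a :: β) i j ∧ w[j]? = some a}.Finite := by
  classical
  rcases isEmpty_or_nonempty T with hT | hT
  · exact Set.toFinite _
  · inhabit T
    set n := w.length with hn
    set K := hfin.toFinset.sup (fun r => r.2.length) with hKdef
    apply Set.Finite.subset (Set.Finite.image
      (f := fun q : (N × List (Symbol T N)) × ℕ × ℕ × ℕ =>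
        (q.1.1, q.1.2.take q.2.1, w.getD q.2.2.2 default, (q.1.2.drop q.2.1).tail,
          q.2.2.1, q.2.2.2))
      (hfin.prod (((Set.finite_Iic K).prod
        ((Set.finite_Iic n).prod (Set.finite_Iic n))))))
    rintro ⟨A, α, a, β, i, j⟩ ⟨he, ha⟩
    obtain ⟨hmem, hij, hjn, -⟩ := he.bound
    refine ⟨((A, α ++ (Symbol.terminal a :: β)), α.length, i, j), ?_, ?_⟩
    · refine ⟨hmem, ?_, hij.trans hjn, hjn⟩
      have h1 : α.length ≤ (α ++ Symbol.terminal a :: β).length := by simp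
      exact h1.trans (Finset.le_sup (f := fun r => r.2.length) (hfin.mem_toFinset.2 hmem))
    · have hD : w.getD j default = a := by
        rw [List.getD_eq_getElem?_getD, ha]; rfl
      have hD2 : w[j]? = some a := by simpa using ha
      simp [List.take_left, List.drop_left, hD2]

theorem finE3 (hfin : g.rules.Finite) :
    {x : N × List (Symbol T N) × N × List (Symbol T N) × ℕ × ℕ × List (Symbol T N) × ℕ |
      match x with
      | (A, α, B, β, i, k, γ, j) =>
          Earley g w A α (Symbol.nonterminal B :: β) i k ∧ (B, γ) ∈ g.rules ∧
        Earley g w B γ [] k j}.Finite := by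
  classical
  set n := w.length with hn
  set K := hfin.toFinset.sup (fun r => r.2.length) with hKdef
  apply Set.Finite.subset (Set.Finite.image
    (f := fun q : (N × List (Symbol T N)) × (N × List (Symbol T N)) × ℕ × ℕ × ℕ × ℕ =>
      (q.1.1, q.1.2.take q.2.2.1, q.2.1.1, (q.1.2.drop q.2.2.1).tail,
        q.2.2.2.1, q.2.2.2.2.1, q.2.1.2, q.2.2.2.2.2))
    (hfin.prod (hfin.prod (((Set.finite_Iic K).prod
      ((Set.finite_Iic n).prod ((Set.finite_Iic n).prod (Set.finite_Iic n))))))))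
  rintro ⟨A, α, B, β, i, k, γ, j⟩ ⟨he, hr, he2⟩
  obtain ⟨hmem, hik, hkn, -⟩ := he.bound
  obtain ⟨-, hkj, hjn, -⟩ := he2.bound
  refine ⟨((A, α ++ (Symbol.nonterminal B :: β)), (B, γ), α.length, i, k, j), ?_, ?_⟩
  · refine ⟨hmem, hr, ?_, hik.trans hkn, hkn, hjn⟩
    have h1 : α.length ≤ (α ++ Symbol.nonterminal B :: β).length := by simp
    exact h1.trans (Finset.le_sup (f := fun r => r.2.length) (hfin.mem_toFinset.2 hmem))
  · simp [List.take_left, List.drop_left]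


end Fin

theorem ncard_zero_of_empty {α : Type*} {s : Set α} (h : ∀ x, x ∉ s) : s.ncard = 0 := by
  rw [Set.eq_empty_iff_forall_notMem.mpr h, Set.ncard_empty]

/-- 𝒱 ≤ (n+2) · ℰ. -/
theorem variant_steps_le (g : CFG T N) (w : List T) (hfin : g.rules.Finite) :
    countV1 g w + countV2 g w + countV3 g w + countV4 g w + countV5 g w +
        countV6 g w + countInit g ≤
      (w.length + 2) * (countE1 g w + countE2 g w + countE3 g w + countInit g) := by
  classical
  by_cases h0 : ∃ δ, (g.initial, δ) ∈ g.rules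
  · -- positive case
    have hcI : 1 ≤ countInit g := by
      rw [countInit]
      have hfin' : {α | (g.initial, α) ∈ g.rules}.Finite := by
        have he : {α | (g.initial, α) ∈ g.rules} =
            (fun α : List (Symbol T N) => (g.initial, α)) ⁻¹' g.rules := rfl
        rw [he]
        refine Set.Finite.preimage (Set.injOn_of_injective ?_) hfin
        intro a b hab
        simpa using congrArg Prod.snd hab
      obtain ⟨δ, hδ⟩ := h0
      exact (Set.ncard_pos hfin').2 ⟨δ, hδ⟩
    have hE1 := finE1 (g := g) (w := w) hfin
    have hE2 := finE2 (g := g) (w := w) hfin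
    have hE3 := finE3 (g := g) (w := w) hfin
    haveI := hE1.to_subtype
    haveI := hE2.to_subtype
    haveI := hE3.to_subtype
    haveI := (Set.finite_Iic w.length).to_subtype
    have hIic : Nat.card (Set.Iic w.length) = w.length + 1 := by
      rw [Nat.card_coe_set_eq, ← Finset.coe_Iic, Set.ncard_coe_finset, Nat.card_Iic]
    have hV1 : countV1 g w ≤ countE1 g w := by
      rw [countV1, countE1, ← Nat.card_coe_set_eq, ← Nat.card_coe_set_eq]
      refine Nat.card_le_card_of_injective (fun x =>
        ⟨((pick g w (Symbol.nonterminal x.1.1 :: x.1.2.1) x.1.2.2.1).1,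
          (pick g w (Symbol.nonterminal x.1.1 :: x.1.2.1) x.1.2.2.1).2.1,
          x.1.1, x.1.2.1,
          (pick g w (Symbol.nonterminal x.1.1 :: x.1.2.1) x.1.2.2.1).2.2,
          x.1.2.2.1, x.1.2.2.2), ?_⟩) ?_
      · obtain ⟨⟨A, β, j, γ⟩, hx⟩ := x
        exact ⟨pick_spec hx.1, hx.2⟩
      · rintro ⟨⟨A, β, j, γ⟩, hx⟩ ⟨⟨A', β', j', γ'⟩, hy⟩ hxy
        simp only [Subtype.mk.injEq, Prod.mk.injEq] at hxy
        obtain ⟨-, -, h3, h4, -, h6, h7⟩ := hxy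
        subst h3; subst h4; subst h6; subst h7
        rfl
    have hV2 : countV2 g w ≤ countE2 g w := by
      rw [countV2, countE2, ← Nat.card_coe_set_eq, ← Nat.card_coe_set_eq]
      refine Nat.card_le_card_of_injective (fun x =>
        ⟨((pick g w (Symbol.terminal x.1.1 :: x.1.2.1) x.1.2.2).1,
          (pick g w (Symbol.terminal x.1.1 :: x.1.2.1) x.1.2.2).2.1,
          x.1.1, x.1.2.1,
          (pick g w (Symbol.terminal x.1.1 :: x.1.2.1) x.1.2.2).2.2,
          x.1.2.2), ?_⟩) ?_
      · obtain ⟨⟨a, β, j⟩, hx⟩ := x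
        exact ⟨pick_spec hx.1, hx.2⟩
      · rintro ⟨⟨a, β, j⟩, hx⟩ ⟨⟨a', β', j'⟩, hy⟩ hxy
        simp only [Subtype.mk.injEq, Prod.mk.injEq] at hxy
        obtain ⟨-, -, h3, h4, -, h6⟩ := hxy
        subst h3; subst h4; subst h6
        rfl
    have hV3 : countV3 g w ≤ countE3 g w := by
      rw [countV3, countE3, ← Nat.card_coe_set_eq, ← Nat.card_coe_set_eq]
      refine Nat.card_le_card_of_injective (fun x =>
        ⟨((pick g w (Symbol.nonterminal x.1.1 :: x.1.2.1) x.1.2.2.1).1,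
          (pick g w (Symbol.nonterminal x.1.1 :: x.1.2.1) x.1.2.2.1).2.1,
          x.1.1, x.1.2.1,
          (pick g w (Symbol.nonterminal x.1.1 :: x.1.2.1) x.1.2.2.1).2.2,
          x.1.2.2.1, x.1.2.2.2.1, x.1.2.2.2.2), ?_⟩) ?_
      · obtain ⟨⟨B, β, k, γ, j⟩, hx⟩ := x
        obtain ⟨hu, hr, ht⟩ := hx
        have he := pick_spec hu
        have h1 := var_toEarley.2 _ _ _ ht _ [] _ (Earley.predict he hr)
        exact ⟨he, hr, by simpa using h1⟩
      · rintro ⟨⟨B, β, k, γ, j⟩, hx⟩ ⟨⟨B', β', k', γ', j'⟩, hy⟩ hxy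
        simp only [Subtype.mk.injEq, Prod.mk.injEq] at hxy
        obtain ⟨-, -, h3, h4, -, h6, h7, h8⟩ := hxy
        subst h3; subst h4; subst h6; subst h7; subst h8
        rfl
    have hV4 : countV4 g w ≤ w.length + 1 := by
      rw [countV4]
      have hsub : {m : ℕ | VarU g w [] m} ⊆ Set.Iic w.length := by
        intro m hm
        obtain ⟨p, he⟩ := var_toEarley.1 _ _ hm
        exact he.bound.2.2.1
      have := Set.ncard_le_ncard hsub (Set.finite_Iic _)
      rwa [← Finset.coe_Iic, Set.ncard_coe_finset, Nat.card_Iic] at this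
    have hV5 : countV5 g w ≤ countE2 g w * (w.length + 1) := by
      rw [countV5, countE2, ← Nat.card_coe_set_eq, ← Nat.card_coe_set_eq]
      have hle := Nat.card_le_card_of_injective (α := {x : T × List (Symbol T N) × ℕ × ℕ |
          match x with
          | (a, β, j, m) =>
              VarU g w (Symbol.terminal a :: β) j ∧ w[j]? = some a ∧
                VarT g w β (j + 1) m})
        (β := {x : N × List (Symbol T N) × T × List (Symbol T N) × ℕ × ℕ |
          match x with
          | (A, α, a, β, i, j) =>
              Earley g w A α (Symbol.terminal a :: β) i j ∧ w[j]? = some a} ×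
          (Set.Iic w.length))
        (fun x =>
          (⟨((pick g w (Symbol.terminal x.1.1 :: x.1.2.1) x.1.2.2.1).1,
            (pick g w (Symbol.terminal x.1.1 :: x.1.2.1) x.1.2.2.1).2.1,
            x.1.1, x.1.2.1,
            (pick g w (Symbol.terminal x.1.1 :: x.1.2.1) x.1.2.2.1).2.2,
            x.1.2.2.1), by
              obtain ⟨⟨a, β, j, m⟩, hx⟩ := x
              exact ⟨pick_spec hx.1, hx.2.1⟩⟩,
          ⟨x.1.2.2.2, by
              obtain ⟨⟨a, β, j, m⟩, hx⟩ := x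
              obtain ⟨hu, ha, ht⟩ := hx
              have he := pick_spec hu
              have h2 := var_toEarley.2 _ _ _ ht _ _ _ (Earley.scan he ha)
              exact h2.bound.2.2.1⟩)) ?_
      · rw [Nat.card_prod, hIic] at hle
        exact hle
      · rintro ⟨⟨a, β, j, m⟩, hx⟩ ⟨⟨a', β', j', m'⟩, hy⟩ hxy
        simp only [Prod.mk.injEq, Subtype.mk.injEq] at hxy
        obtain ⟨⟨-, -, h3, h4, -, h6⟩, h7⟩ := hxy
        subst h3; subst h4; subst h6; subst h7
        rfl
    have hV6 : countV6 g w ≤ countE3 g w * (w.length + 1) := by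
      rw [countV6, countE3, ← Nat.card_coe_set_eq, ← Nat.card_coe_set_eq]
      have hle := Nat.card_le_card_of_injective
        (α := {x : N × List (Symbol T N) × ℕ × List (Symbol T N) × ℕ × ℕ |
          match x with
          | (B, β, k, γ, j, m) =>
              VarU g w (Symbol.nonterminal B :: β) k ∧ (B, γ) ∈ g.rules ∧
                VarT g w γ k j ∧ VarT g w β j m})
        (β := {x : N × List (Symbol T N) × N × List (Symbol T N) × ℕ × ℕ ×
            List (Symbol T N) × ℕ |
          match x with
          | (A, α, B, β, i, k, γ, j) =>
              Earley g w A α (Symbol.nonterminal B :: β) i k ∧ (B, γ) ∈ g.rules ∧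
                Earley g w B γ [] k j} × (Set.Iic w.length))
        (fun x =>
          (⟨((pick g w (Symbol.nonterminal x.1.1 :: x.1.2.1) x.1.2.2.1).1,
            (pick g w (Symbol.nonterminal x.1.1 :: x.1.2.1) x.1.2.2.1).2.1,
            x.1.1, x.1.2.1,
            (pick g w (Symbol.nonterminal x.1.1 :: x.1.2.1) x.1.2.2.1).2.2,
            x.1.2.2.1, x.1.2.2.2.1, x.1.2.2.2.2.1), by
              obtain ⟨⟨B, β, k, γ, j, m⟩, hx⟩ := x
              obtain ⟨hu, hr, ht1, ht2⟩ := hx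
              have he := pick_spec hu
              have h1 := var_toEarley.2 _ _ _ ht1 _ [] _ (Earley.predict he hr)
              exact ⟨he, hr, by simpa using h1⟩⟩,
          ⟨x.1.2.2.2.2.2, by
              obtain ⟨⟨B, β, k, γ, j, m⟩, hx⟩ := x
              obtain ⟨hu, hr, ht1, ht2⟩ := hx
              have he := pick_spec hu
              have h1 := var_toEarley.2 _ _ _ ht1 _ [] _ (Earley.predict he hr)
              have h2 := Earley.complete he (by simpa using h1) hr
              have h3 := var_toEarley.2 _ _ _ ht2 _ _ _ h2
              exact h3.bound.2.2.1⟩)) ?_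
      · rw [Nat.card_prod, hIic] at hle
        exact hle
      · rintro ⟨⟨B, β, k, γ, j, m⟩, hx⟩ ⟨⟨B', β', k', γ', j', m'⟩, hy⟩ hxy
        simp only [Prod.mk.injEq, Subtype.mk.injEq] at hxy
        obtain ⟨⟨-, -, h3, h4, -, h6, h7, h8⟩, h9⟩ := hxy
        subst h3; subst h4; subst h6; subst h7; subst h8; subst h9
        rfl
    have key : (w.length + 2) * (countE1 g w + countE2 g w + countE3 g w + countInit g) =
        (countE1 g w + countE2 g w + countE3 g w + countInit g) +
          ((w.length + 1) * countE1 g w + countE2 g w * (w.length + 1) +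
            countE3 g w * (w.length + 1) + (w.length + 1) * countInit g) := by ring
    have h9 : w.length + 1 ≤ (w.length + 1) * countInit g :=
      Nat.le_mul_of_pos_right _ hcI
    linarith [hV1, hV2, hV3, hV4, hV5, hV6, h9, key,
      Nat.zero_le ((w.length + 1) * countE1 g w)]
  · -- degenerate case: no start production at all
    have hnoU : ∀ β j, ¬ VarU g w β j := by
      intro β j h
      obtain ⟨p, he⟩ := var_toEarley.1 β j h
      exact h0 he.bound.2.2.2
    have e1 : countV1 g w = 0 := by
      rw [countV1]
      apply ncard_zero_of_empty
      rintro ⟨A, β, j, γ⟩ ⟨h, -⟩; exact hnoU _ _ h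
    have e2 : countV2 g w = 0 := by
      rw [countV2]
      apply ncard_zero_of_empty
      rintro ⟨a, β, j⟩ ⟨h, -⟩; exact hnoU _ _ h
    have e3 : countV3 g w = 0 := by
      rw [countV3]
      apply ncard_zero_of_empty
      rintro ⟨B, β, k, γ, j⟩ ⟨h, -⟩; exact hnoU _ _ h
    have e4 : countV4 g w = 0 := by
      rw [countV4]
      apply ncard_zero_of_empty
      intro m h; exact hnoU _ _ h
    have e5 : countV5 g w = 0 := by
      rw [countV5]
      apply ncard_zero_of_empty
      rintro ⟨a, β, j, m⟩ ⟨h, -⟩; exact hnoU _ _ h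
    have e6 : countV6 g w = 0 := by
      rw [countV6]
      apply ncard_zero_of_empty
      rintro ⟨B, β, k, γ, j, m⟩ ⟨h, -⟩; exact hnoU _ _ h
    have e0 : countInit g = 0 := by
      rw [countInit]
      apply ncard_zero_of_empty
      intro α h; exact h0 ⟨α, h⟩
    simp [e1, e2, e3, e4, e5, e6, e0]
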